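/- Let S be a commutative semigroup with zero, G = Γ(S), and b a vertex of G that is not an end vertex (deg(b) ≥ 2) and such that there exists at least one end vertex adjacent to b. Then {0, b} is an ideal of S, i.e., bS ⊆ {0, b}. -/

import Mathlib

/-- A zero-divisor: a nonzero element annihilated by some nonzero element. -/
def IsZeroDivisorElem {S : Type*} [Mul S] [Zero S] (x : S) : Prop :=
  x ≠ 0 ∧ ∃ y : S, y ≠ 0 ∧ x * y = 0

/-- The zero-divisor graph Γ(S) of a commutative semigroup with zero:
vertices are the nonzero zero-divisors, two distinct vertices adjacent iff their product is 0. -/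
def zdGraph (S : Type*) [CommSemigroup S] [Zero S] :
    SimpleGraph {x : S // IsZeroDivisorElem x} where
  Adj a b := a ≠ b ∧ (a : S) * (b : S) = 0
  symm := by
    constructor
    rintro a b ⟨h1, h2⟩
    exact ⟨h1.symm, by rwa [mul_comm] at h2⟩
  loopless := by constructor; rintro a ⟨h, _⟩; exact h rfl

/-- An end vertex: a vertex of degree one (exactly one neighbor). -/
def IsEndVertex {V : Type*} (G : SimpleGraph V) (v : V) : Prop :=
  ∃! u, G.Adj v u

/-- An internal vertex: degree ≥ 2 and no neighbor of degree 1. -/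
def IsInternal {V : Type*} (G : SimpleGraph V) (v : V) : Prop :=
  (∃ u, G.Adj v u) ∧ ¬ IsEndVertex G v ∧ ∀ u, G.Adj v u → ¬ IsEndVertex G u

/-- C(a,b): the elements of S that are vertices whose neighborhood is exactly {a, b}. -/
def cSet (S : Type*) [CommSemigroup S] [Zero S]
    (a b : {x : S // IsZeroDivisorElem x}) : Set S :=
  {x : S | ∃ h : IsZeroDivisorElem x, (zdGraph S).neighborSet ⟨x, h⟩ = {a, b}}

/-- T_a: the elements of S that are end vertices adjacent to the vertex a. -/
def tSet (S : Type*) [CommSemigroup S] [Zero S]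
    (a : {x : S // IsZeroDivisorElem x}) : Set S :=
  {x : S | ∃ h : IsZeroDivisorElem x,
    (zdGraph S).Adj ⟨x, h⟩ a ∧ IsEndVertex (zdGraph S) ⟨x, h⟩}

/-- If b is not an end vertex but has an end-vertex neighbor, then {0, b} is an ideal of S. -/
theorem stmt4 {S : Type*} [CommSemigroup S] [Zero S] (hz : ∀ x : S, 0 * x = 0)
    (b : {s : S // IsZeroDivisorElem s})
    (hb : ¬ IsEndVertex (zdGraph S) b)
    (hend : ∃ x, (zdGraph S).Adj b x ∧ IsEndVertex (zdGraph S) x) :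
    ∀ x ∈ ({0, (b : S)} : Set S), ∀ t : S, x * t ∈ ({0, (b : S)} : Set S) := by
  obtain ⟨a, hba, haend⟩ := hend
  intro x hx t
  rcases hx with hx | hx
  · subst hx
    exact Or.inl (hz t)
  · subst hx
    by_cases h0 : (b : S) * t = 0
    · exact Or.inl h0
    have hab : (a : S) * (b : S) = 0 := by
      have := hba.2; rwa [mul_comm] at this
    have hann : (b : S) * t * (a : S) = 0 := by
      rw [mul_right_comm, hba.2, hz]
    have hzd : IsZeroDivisorElem ((b : S) * t) := ⟨h0, a, a.2.1, hann⟩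
    by_cases hbta : (b : S) * t = (a : S)
    · -- get a second neighbor c of b
      exfalso
      simp only [IsEndVertex, ExistsUnique, not_exists, not_and, not_forall] at hb
      obtain ⟨c, hbc, hca⟩ := hb a hba
      have hcbt : (c : S) * ((b : S) * t) = 0 := by
        rw [← mul_assoc, mul_comm (c : S) (b : S), hbc.2, hz]
      have hadjac : (zdGraph S).Adj a c := by
        refine ⟨fun h => hca h.symm, ?_⟩
        rw [← hbta, mul_comm]; exact hcbt
      obtain ⟨u, hu, huniq⟩ := haend
      have h1 : c = u := huniq c hadjac
      have h2 : b = u := huniq b hba.symm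
      exact hbc.1 (h2.trans h1.symm)
    · -- b*t is a vertex adjacent to a, so equals b by uniqueness
      right
      set v : {s : S // IsZeroDivisorElem s} := ⟨(b : S) * t, hzd⟩
      have hadjav : (zdGraph S).Adj a v := by
        refine ⟨fun h => hbta (congrArg Subtype.val h).symm, ?_⟩
        rw [mul_comm]; exact hann
      obtain ⟨u, hu, huniq⟩ := haend
      have h1 : v = u := huniq v hadjav
      have h2 : b = u := huniq b hba.symm
      have : v = b := h1.trans h2.symm
      exact congrArg Subtype.val this
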